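/- The H_N-action on (C^m)^{⊗N} ⊗ U given by permutations of the C^m factors and by z_p ↦ Σ_{a,b=1}^m E_{ab}^{(p)} ⊗ E_{ba} commutes with the diagonal action of gl_m on (C^m)^{⊗N} ⊗ U. -/

import Mathlib

open scoped TensorProduct
open scoped Classical

/-- The vector space `(ℂ^m)^{⊗N}`, realized as functions on the standard basis
indexed by `Fin N → Fin m`. -/
abbrev TensorPow (m N : ℕ) := (Fin N → Fin m) → ℂ

/-- The operator permuting the `N` tensor factors of `(ℂ^m)^{⊗N}` by `σ`. -/
noncomputable def permOp {m N : ℕ} (σ : Equiv.Perm (Fin N)) :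
    Module.End ℂ (TensorPow m N) where
  toFun f := fun g => f (g ∘ σ)
  map_add' _ _ := rfl
  map_smul' _ _ := rfl

/-- The operator `E_{ab}^{(p)}`, acting as the matrix unit `E_{ab}` in the `p`-th
tensor factor of `(ℂ^m)^{⊗N}` and identically elsewhere. -/
noncomputable def matUnitOp {m N : ℕ} (p : Fin N) (a b : Fin m) :
    Module.End ℂ (TensorPow m N) where
  toFun f := fun g => if g p = a then f (Function.update g p b) else 0
  map_add' _ _ := by funext g; by_cases h : g p = a <;> simp [h]
  map_smul' _ _ := by funext g; by_cases h : g p = a <;> simp [h]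

variable {m N : ℕ} {U : Type*} [AddCommGroup U] [Module ℂ U]

/-- The permutation operator on `(ℂ^m)^{⊗N} ⊗ U`. -/
noncomputable def permT (σ : Equiv.Perm (Fin N)) :
    Module.End ℂ (TensorPow m N ⊗[ℂ] U) :=
  TensorProduct.map (permOp σ) LinearMap.id

/-- Given a representation `ρ` of `gl_m` on `U`, the operator
`Ω_p = Σ_{a,b} E_{ab}^{(p)} ⊗ E_{ba}` on `(ℂ^m)^{⊗N} ⊗ U`. -/
noncomputable def omegaOp (ρ : Matrix (Fin m) (Fin m) ℂ →ₗ[ℂ] Module.End ℂ U)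
    (p : Fin N) : Module.End ℂ (TensorPow m N ⊗[ℂ] U) :=
  ∑ a : Fin m, ∑ b : Fin m,
    TensorProduct.map (matUnitOp p a b) (ρ (Matrix.single b a 1))

/-- The action of `X ∈ gl_m` on the `p`-th tensor factor of `(ℂ^m)^{⊗N}`. -/
noncomputable def matOp {m N : ℕ} (p : Fin N) (X : Matrix (Fin m) (Fin m) ℂ) :
    Module.End ℂ (TensorPow m N) :=
  ∑ a : Fin m, ∑ b : Fin m, X a b • matUnitOp p a b

/-- The diagonal action of `X ∈ gl_m` on `(ℂ^m)^{⊗N} ⊗ U`: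
`Σ_p X^{(p)} ⊗ id + id^{⊗N} ⊗ X`. -/
noncomputable def diagAct (ρ : Matrix (Fin m) (Fin m) ℂ →ₗ[ℂ] Module.End ℂ U)
    (X : Matrix (Fin m) (Fin m) ℂ) : Module.End ℂ (TensorPow m N ⊗[ℂ] U) :=
  (∑ p : Fin N, TensorProduct.map (matOp p X) LinearMap.id) +
    TensorProduct.map LinearMap.id (ρ X)

lemma matUnitOp_apply (p : Fin N) (a b : Fin m) (f : TensorPow m N) (g : Fin N → Fin m) :
    matUnitOp p a b f g = if g p = a then f (Function.update g p b) else 0 := rfl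

lemma matUnit_mul_matUnit (p : Fin N) (a b c d : Fin m) :
    matUnitOp (m := m) (N := N) p a b * matUnitOp p c d =
      if b = c then matUnitOp p a d else 0 := by
  apply LinearMap.ext; intro f; funext g
  by_cases h : g p = a <;> by_cases hbc : b = c <;>
    simp [Module.End.mul_apply, matUnitOp_apply, h, hbc, Function.update_self,
      Function.update_idem]

lemma matUnit_comm {p q : Fin N} (hpq : p ≠ q) (a b c d : Fin m) :
    matUnitOp (m := m) (N := N) p a b * matUnitOp q c d =
      matUnitOp q c d * matUnitOp p a b := by
  apply LinearMap.ext; intro f; funext g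
  by_cases h1 : g p = a <;> by_cases h2 : g q = c <;>
    simp [Module.End.mul_apply, matUnitOp_apply, h1, h2, Function.update_of_ne hpq,
      Function.update_of_ne (Ne.symm hpq), Function.update_comm hpq]

lemma matOp_mul_matUnit (p : Fin N) (X : Matrix (Fin m) (Fin m) ℂ) (a b : Fin m) :
    matOp p X * matUnitOp p a b = ∑ c : Fin m, X c a • matUnitOp p c b := by
  simp only [matOp, Finset.sum_mul, smul_mul_assoc, matUnit_mul_matUnit]
  simp

lemma matUnit_mul_matOp (p : Fin N) (X : Matrix (Fin m) (Fin m) ℂ) (a b : Fin m) :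
    matUnitOp p a b * matOp p X = ∑ d : Fin m, X b d • matUnitOp p a d := by
  simp only [matOp, Finset.mul_sum, mul_smul_comm, matUnit_mul_matUnit]
  rw [Finset.sum_comm]
  simp

lemma matOp_comm_matUnit {p q : Fin N} (hqp : q ≠ p) (X : Matrix (Fin m) (Fin m) ℂ)
    (a b : Fin m) :
    matOp q X * matUnitOp p a b = matUnitOp p a b * matOp q X := by
  simp only [matOp, Finset.sum_mul, Finset.mul_sum, smul_mul_assoc, mul_smul_comm]
  refine Finset.sum_congr rfl fun c _ => Finset.sum_congr rfl fun d _ => ?_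
  rw [matUnit_comm hqp]

lemma permOp_mul_matUnit (σ : Equiv.Perm (Fin N)) (p : Fin N) (a b : Fin m) :
    permOp (m := m) σ * matUnitOp p a b = matUnitOp (σ p) a b * permOp σ := by
  apply LinearMap.ext; intro f; funext g
  have hupd : Function.update (g ∘ σ) p b = (Function.update g (σ p) b) ∘ σ := by
    funext x
    by_cases hx : x = p
    · subst hx; simp
    · have : σ x ≠ σ p := fun h => hx (σ.injective h)
      simp [Function.update_of_ne hx, Function.update_of_ne this]
  simp [Module.End.mul_apply, matUnitOp_apply, permOp, hupd]

lemma permOp_mul_matOp (σ : Equiv.Perm (Fin N)) (p : Fin N) (X : Matrix (Fin m) (Fin m) ℂ) :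
    permOp (m := m) σ * matOp p X = matOp (σ p) X * permOp σ := by
  simp only [matOp, Finset.sum_mul, Finset.mul_sum, smul_mul_assoc, mul_smul_comm,
    permOp_mul_matUnit]

lemma mul_stdBasis (X : Matrix (Fin m) (Fin m) ℂ) (b a : Fin m) :
    X * Matrix.single b a 1 = ∑ c : Fin m, X c b • Matrix.single c a 1 := by
  ext i j
  simp [Matrix.mul_apply, Matrix.single, Matrix.sum_apply, Matrix.of_apply,
    mul_ite, ite_and, Pi.smul_apply, smul_eq_mul]

lemma stdBasis_mul (X : Matrix (Fin m) (Fin m) ℂ) (b a : Fin m) :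
    Matrix.single b a 1 * X = ∑ d : Fin m, X a d • Matrix.single b d 1 := by
  ext i j
  simp [Matrix.mul_apply, Matrix.single, Matrix.sum_apply, Matrix.of_apply,
    mul_ite, ite_and, Pi.smul_apply, smul_eq_mul]


section TensorLemmas

variable (T : Type*) [AddCommGroup T] [Module ℂ T]

lemma mapMul (A B : Module.End ℂ T) (C D : Module.End ℂ U) :
    TensorProduct.map A C * TensorProduct.map B D = TensorProduct.map (A * B) (C * D) := by
  apply TensorProduct.ext'
  intro x y
  simp [Module.End.mul_apply]

lemma id_mul' (C : Module.End ℂ U) : (LinearMap.id : Module.End ℂ U) * C = C := by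
  apply LinearMap.ext; intro x; simp [Module.End.mul_apply]

lemma mul_id' (C : Module.End ℂ U) : C * (LinearMap.id : Module.End ℂ U) = C := by
  apply LinearMap.ext; intro x; simp [Module.End.mul_apply]

lemma mapSumL {ι : Type*} (s : Finset ι) (A : ι → Module.End ℂ T) (C : Module.End ℂ U) :
    TensorProduct.map (∑ i ∈ s, A i) C = ∑ i ∈ s, TensorProduct.map (A i) C := by
  apply TensorProduct.ext'
  intro x y
  simp [LinearMap.sum_apply, TensorProduct.sum_tmul]

lemma mapSumR {ι : Type*} (s : Finset ι) (A : Module.End ℂ T) (C : ι → Module.End ℂ U) :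
    TensorProduct.map A (∑ i ∈ s, C i) = ∑ i ∈ s, TensorProduct.map A (C i) := by
  apply TensorProduct.ext'
  intro x y
  simp [LinearMap.sum_apply, TensorProduct.tmul_sum]

lemma mapSmulL (r : ℂ) (A : Module.End ℂ T) (C : Module.End ℂ U) :
    TensorProduct.map (r • A) C = r • TensorProduct.map A C := by
  apply TensorProduct.ext'
  intro x y
  simp [TensorProduct.smul_tmul']

lemma mapSmulR (r : ℂ) (A : Module.End ℂ T) (C : Module.End ℂ U) :
    TensorProduct.map A (r • C) = r • TensorProduct.map A C := by
  apply TensorProduct.ext'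
  intro x y
  simp [TensorProduct.tmul_smul]

lemma mapSubR (A : Module.End ℂ T) (C D : Module.End ℂ U) :
    TensorProduct.map A (C - D) = TensorProduct.map A C - TensorProduct.map A D := by
  apply TensorProduct.ext'
  intro x y
  simp [TensorProduct.tmul_sub]

end TensorLemmas

lemma sum3_rev {M : Type*} [AddCommMonoid M] (f : Fin m → Fin m → Fin m → M) :
    ∑ a : Fin m, ∑ b : Fin m, ∑ c : Fin m, f a b c
      = ∑ a : Fin m, ∑ b : Fin m, ∑ c : Fin m, f c b a := by
  calc ∑ a : Fin m, ∑ b : Fin m, ∑ c : Fin m, f a b c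
      = ∑ x : Fin m × Fin m × Fin m, f x.1 x.2.1 x.2.2 := by
        rw [Fintype.sum_prod_type]
        exact Finset.sum_congr rfl fun a _ =>
          (Fintype.sum_prod_type (fun y : Fin m × Fin m => f a y.1 y.2)).symm
    _ = ∑ x : Fin m × Fin m × Fin m, f x.2.2 x.2.1 x.1 := by
        exact Fintype.sum_equiv
          ⟨fun x => (x.2.2, x.2.1, x.1), fun x => (x.2.2, x.2.1, x.1),
            fun ⟨a, b, c⟩ => rfl, fun ⟨a, b, c⟩ => rfl⟩ _ _ (fun ⟨a, b, c⟩ => rfl)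
    _ = _ := by
        rw [Fintype.sum_prod_type]
        exact Finset.sum_congr rfl fun a _ =>
          Fintype.sum_prod_type (fun y : Fin m × Fin m => f y.2 y.1 a)

lemma sum3_swap23 {M : Type*} [AddCommMonoid M] (f : Fin m → Fin m → Fin m → M) :
    ∑ a : Fin m, ∑ b : Fin m, ∑ c : Fin m, f a b c
      = ∑ a : Fin m, ∑ b : Fin m, ∑ c : Fin m, f a c b :=
  Finset.sum_congr rfl fun a _ => Finset.sum_comm


lemma id_mul'' {V : Type*} [AddCommGroup V] [Module ℂ V] (C : Module.End ℂ V) :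
    (LinearMap.id : Module.End ℂ V) * C = C := by
  apply LinearMap.ext; intro x; simp [Module.End.mul_apply]

lemma mul_id'' {V : Type*} [AddCommGroup V] [Module ℂ V] (C : Module.End ℂ V) :
    C * (LinearMap.id : Module.End ℂ V) = C := by
  apply LinearMap.ext; intro x; simp [Module.End.mul_apply]

lemma mapAddR (T : Type*) [AddCommGroup T] [Module ℂ T]
    (A : Module.End ℂ T) (C D : Module.End ℂ U) :
    TensorProduct.map A (C + D) = TensorProduct.map A C + TensorProduct.map A D := by
  apply TensorProduct.ext'
  intro x y
  simp [TensorProduct.tmul_add]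

lemma sum_rotate {α β γ M : Type*} [Fintype α] [Fintype β] [Fintype γ] [AddCommMonoid M]
    (F : α → β → γ → M) :
    ∑ q : α, ∑ a : β, ∑ b : γ, F q a b = ∑ a : β, ∑ b : γ, ∑ q : α, F q a b := by
  rw [Finset.sum_comm]
  exact Finset.sum_congr rfl fun _ _ => Finset.sum_comm


set_option maxHeartbeats 1600000 in
/-- The `H_N`-action on `(ℂ^m)^{⊗N} ⊗ U` given by permutations of the tensor factors
and by `z_p ↦ Σ_{a,b} E_{ab}^{(p)} ⊗ E_{ba}` commutes with the diagonal action of `gl_m`. -/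
theorem stmt5 (m N : ℕ) (U : Type*) [AddCommGroup U] [Module ℂ U]
    (ρ : Matrix (Fin m) (Fin m) ℂ →ₗ[ℂ] Module.End ℂ U)
    (hρ : ∀ X Y : Matrix (Fin m) (Fin m) ℂ,
      ρ (X * Y - Y * X) = ρ X * ρ Y - ρ Y * ρ X) :
    ∀ X : Matrix (Fin m) (Fin m) ℂ,
      (∀ p : Fin N, Commute (diagAct ρ X) (omegaOp ρ p)) ∧
      (∀ σ : Equiv.Perm (Fin N), Commute (diagAct ρ X) (permT σ)) := by
  intro X
  -- additive form of the commutation relation in `End U`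
  have hswap2 : ∀ b a : Fin m,
      ρ X * ρ (Matrix.single b a 1)
        + ∑ d : Fin m, X a d • ρ (Matrix.single b d 1)
      = ρ (Matrix.single b a 1) * ρ X
        + ∑ c : Fin m, X c b • ρ (Matrix.single c a 1) := by
    intro b a
    have h1 : ρ (X * Matrix.single b a 1 - Matrix.single b a 1 * X)
        = ρ X * ρ (Matrix.single b a 1)
          - ρ (Matrix.single b a 1) * ρ X := hρ _ _
    have h2 : ρ (X * Matrix.single b a 1 - Matrix.single b a 1 * X)
        = (∑ c : Fin m, X c b • ρ (Matrix.single c a 1))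
          - ∑ d : Fin m, X a d • ρ (Matrix.single b d 1) := by
      rw [mul_stdBasis, stdBasis_mul, map_sub, map_sum, map_sum]
      simp only [map_smul]
    have h3 := h1.symm.trans h2
    rw [sub_eq_sub_iff_add_eq_add] at h3
    exact h3.trans (add_comm _ _)
  constructor
  · intro p
    show diagAct ρ X * omegaOp ρ p = omegaOp ρ p * diagAct ρ X
    have e1 : ∑ a : Fin m, ∑ b : Fin m,
          TensorProduct.map (matOp p X * matUnitOp p a b)
            (ρ (Matrix.single b a 1))
        = ∑ a : Fin m, ∑ b : Fin m, ∑ d : Fin m,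
            X a d • TensorProduct.map (matUnitOp p a b)
              (ρ (Matrix.single b d 1)) := by
      simp only [matOp_mul_matUnit, mapSumL, mapSmulL]
      exact sum3_rev (f := fun a b c => X c a • TensorProduct.map (matUnitOp p c b)
        (ρ (Matrix.single b a 1)))
    have e2 : ∑ a : Fin m, ∑ b : Fin m,
          TensorProduct.map (matUnitOp p a b * matOp p X)
            (ρ (Matrix.single b a 1))
        = ∑ a : Fin m, ∑ b : Fin m, ∑ c : Fin m,
            X c b • TensorProduct.map (matUnitOp p a b)
              (ρ (Matrix.single c a 1)) := by
      simp only [matUnit_mul_matOp, mapSumL, mapSmulL]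
      exact sum3_swap23 (f := fun a b c => X b c • TensorProduct.map (matUnitOp p a c)
        (ρ (Matrix.single b a 1)))
    have per : ∀ a b : Fin m,
        TensorProduct.map (matUnitOp p a b)
            (ρ X * ρ (Matrix.single b a 1))
          + ∑ d : Fin m, X a d • TensorProduct.map (matUnitOp p a b)
              (ρ (Matrix.single b d 1))
        = TensorProduct.map (matUnitOp p a b)
            (ρ (Matrix.single b a 1) * ρ X)
          + ∑ c : Fin m, X c b • TensorProduct.map (matUnitOp p a b)
              (ρ (Matrix.single c a 1)) := by
      intro a b
      have h := congrArg (TensorProduct.map (matUnitOp p a b)) (hswap2 b a)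
      simpa only [mapAddR, mapSumR, mapSmulR] using h
    have dagger :
        (∑ a : Fin m, ∑ b : Fin m, TensorProduct.map (matUnitOp p a b)
            (ρ X * ρ (Matrix.single b a 1)))
          + ∑ a : Fin m, ∑ b : Fin m, ∑ d : Fin m,
              X a d • TensorProduct.map (matUnitOp p a b)
                (ρ (Matrix.single b d 1))
        = (∑ a : Fin m, ∑ b : Fin m, TensorProduct.map (matUnitOp p a b)
            (ρ (Matrix.single b a 1) * ρ X))
          + ∑ a : Fin m, ∑ b : Fin m, ∑ c : Fin m,
              X c b • TensorProduct.map (matUnitOp p a b)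
                (ρ (Matrix.single c a 1)) := by
      have h := Finset.sum_congr rfl fun a (_ : a ∈ Finset.univ) =>
        Finset.sum_congr rfl fun b (_ : b ∈ Finset.univ) => per a b
      simpa only [Finset.sum_add_distrib] using h
    have key : (∑ a : Fin m, ∑ b : Fin m,
            TensorProduct.map (matOp p X * matUnitOp p a b)
              (ρ (Matrix.single b a 1)))
          + ∑ a : Fin m, ∑ b : Fin m,
              TensorProduct.map (matUnitOp p a b)
                (ρ X * ρ (Matrix.single b a 1))
        = (∑ a : Fin m, ∑ b : Fin m,
            TensorProduct.map (matUnitOp p a b * matOp p X)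
              (ρ (Matrix.single b a 1)))
          + ∑ a : Fin m, ∑ b : Fin m,
              TensorProduct.map (matUnitOp p a b)
                (ρ (Matrix.single b a 1) * ρ X) := by
      rw [e1, e2]
      exact (add_comm _ _).trans (dagger.trans (add_comm _ _))
    have split1 : ∀ a b : Fin m,
        ∑ q : Fin N, TensorProduct.map (matOp q X * matUnitOp p a b)
            (ρ (Matrix.single b a 1))
          = (∑ q ∈ Finset.univ.erase p,
              TensorProduct.map (matUnitOp p a b * matOp q X)
                (ρ (Matrix.single b a 1)))
            + TensorProduct.map (matOp p X * matUnitOp p a b)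
                (ρ (Matrix.single b a 1)) := by
      intro a b
      rw [← Finset.sum_erase_add _ _ (Finset.mem_univ p)]
      congr 1
      exact Finset.sum_congr rfl fun q hq => by
        rw [matOp_comm_matUnit (Finset.ne_of_mem_erase hq)]
    have split2 : ∀ a b : Fin m,
        ∑ q : Fin N, TensorProduct.map (matUnitOp p a b * matOp q X)
            (ρ (Matrix.single b a 1))
          = (∑ q ∈ Finset.univ.erase p,
              TensorProduct.map (matUnitOp p a b * matOp q X)
                (ρ (Matrix.single b a 1)))
            + TensorProduct.map (matUnitOp p a b * matOp p X)
                (ρ (Matrix.single b a 1)) := by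
      intro a b
      rw [← Finset.sum_erase_add _ _ (Finset.mem_univ p)]
    simp only [diagAct, omegaOp, add_mul, mul_add, Finset.sum_mul, Finset.mul_sum,
      mapMul, id_mul'', mul_id'']
    rw [sum_rotate]
    simp only [split1, split2, Finset.sum_add_distrib]
    rw [add_assoc, add_assoc, key]
  · intro σ
    show diagAct ρ X * permT σ = permT σ * diagAct ρ X
    simp only [diagAct, permT, add_mul, mul_add, Finset.sum_mul, Finset.mul_sum,
      mapMul, id_mul'', mul_id'', permOp_mul_matOp]
    congr 1
    exact (Equiv.sum_comp σ fun q =>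
      TensorProduct.map (matOp q X * permOp σ) LinearMap.id).symm
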